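/- arXiv:2102.00526 — 3 statements merged into one kernel-verified Lean document; each statement's English description precedes it below -/
import Mathlib

section
/- Let J_0 = {2, 4, 6, …} and J_1 = {3, 5, 7, …}, and for i ∈ {0,1} let U_i be a nonprincipal ultrafilter on J_i. Then the ultraproducts A_0 = ∏_{n ∈ J_0} K_n / U_0 and A_1 = ∏_{n ∈ J_1} K_n / U_1 of the crowns K_n, taken as structures for the language with one binary relation symbol ≤, are isomorphic partially ordered sets. Moreover, each A_i has cardinality 2^{ℵ_0} and is a cardinal (disjoint) sum of 2^{ℵ_0} copies of the infinite fence. -/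
/-- The underlying set of the `n`-crown `K_n`: `Sum.inl j` is the maximal element `a j` and
`Sum.inr i` is the minimal element `b i`. -/
structure Crown (n : ℕ) where
  toSum : Fin n ⊕ Fin n

/-- The order of the `n`-crown: `b i ≤ a j` iff `i = j` or `i + 1 ≡ j (mod n)`; these,
together with reflexivity, are the only comparabilities. -/
instance (n : ℕ) : PartialOrder (Crown n) where
  le x y := x = y ∨ ∃ i j : Fin n, x.toSum = Sum.inr i ∧ y.toSum = Sum.inl j ∧
    ((j : ℕ) = (i : ℕ) ∨ (j : ℕ) = ((i : ℕ) + 1) % n)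
  le_refl x := Or.inl rfl
  le_trans x y z hxy hyz := by
    rcases hxy with rfl | ⟨i, j, hx, hy, hij⟩
    · exact hyz
    · rcases hyz with rfl | ⟨i', j', hy', _, _⟩
      · exact Or.inr ⟨i, j, hx, hy, hij⟩
      · rw [hy] at hy'; exact absurd hy' (by simp)
  le_antisymm x y hxy hyx := by
    rcases hxy with rfl | ⟨i, j, hx, hy, _⟩
    · rfl
    · rcases hyx with h | ⟨i', j', hy', hx', _⟩
      · exact h.symm
      · rw [hx] at hx'; exact absurd hx' (by simp)

/-- The underlying set of the infinite fence: `Sum.inl s` is the maximal element `a s` and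
`Sum.inr j` is the minimal element `b j` (`j, s ∈ ℤ`). -/
structure Fence where
  toSum : ℤ ⊕ ℤ

/-- The order of the infinite fence: `b j ≤ a s` iff `s = j` or `s = j + 1`; these, together
with reflexivity, are the only comparabilities. -/
instance : PartialOrder Fence where
  le x y := x = y ∨ ∃ j s : ℤ, x.toSum = Sum.inr j ∧ y.toSum = Sum.inl s ∧
    (s = j ∨ s = j + 1)
  le_refl x := Or.inl rfl
  le_trans x y z hxy hyz := by
    rcases hxy with rfl | ⟨i, j, hx, hy, hij⟩
    · exact hyz
    · rcases hyz with rfl | ⟨i', j', hy', _, _⟩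
      · exact Or.inr ⟨i, j, hx, hy, hij⟩
      · rw [hy] at hy'; exact absurd hy' (by simp)
  le_antisymm x y hxy hyx := by
    rcases hxy with rfl | ⟨i, j, hx, hy, _⟩
    · rfl
    · rcases hyx with h | ⟨i', j', hy', hx', _⟩
      · exact h.symm
      · rw [hx] at hx'; exact absurd hx' (by simp)

section UProd

variable {ι : Type*} (U : Ultrafilter ι) (M : ι → Type*)

/-- Two elements of the direct product are equivalent if they agree on a set belonging to
the ultrafilter. -/
def uprodSetoid : Setoid (∀ i, M i) where
  r f g := {i | f i = g i} ∈ (U : Filter ι)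
  iseqv := by
    refine ⟨fun f => ?_, fun {f g} h => ?_, fun {f g h} h₁ h₂ => ?_⟩
    · simp
    · exact Filter.mem_of_superset h fun i hi => hi.symm
    · exact Filter.mem_of_superset (Filter.inter_mem h₁ h₂) fun i hi => hi.1.trans hi.2

/-- The ultraproduct of the family `M` modulo the ultrafilter `U`. -/
def UProd : Type _ := Quotient (uprodSetoid U M)

/-- The relation induced on the ultraproduct by a family of binary relations: it holds iff
it holds coordinatewise on a set belonging to the ultrafilter. -/
def UProd.rel (r : ∀ i, M i → M i → Prop) : UProd U M → UProd U M → Prop :=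
  Quotient.lift₂ (fun f g => {i | r i (f i) (g i)} ∈ (U : Filter ι))
    (by
      intro f₁ g₁ f₂ g₂ hf hg
      refine propext ⟨fun h => ?_, fun h => ?_⟩
      · refine Filter.mem_of_superset (Filter.inter_mem (Filter.inter_mem hf hg) h) ?_
        rintro i ⟨⟨ef, eg⟩, hr⟩
        simp only [Set.mem_setOf_eq] at *
        rw [← ef, ← eg]; exact hr
      · refine Filter.mem_of_superset (Filter.inter_mem (Filter.inter_mem hf hg) h) ?_
        rintro i ⟨⟨ef, eg⟩, hr⟩
        simp only [Set.mem_setOf_eq] at *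
        rw [ef, eg]; exact hr)

end UProd

namespace CrownUP

/-- Shift by `k` on `Fin m`. -/
def sf (k : ℤ) {m : ℕ} (i : Fin m) : Fin m :=
  ⟨(((i : ℕ) + k) % (m : ℤ)).toNat, by
    have hm : 0 < m := i.pos
    have h1 : 0 ≤ (((i : ℕ) : ℤ) + k) % (m : ℤ) :=
      Int.emod_nonneg _ (by exact_mod_cast hm.ne')
    have h2 : (((i : ℕ) : ℤ) + k) % (m : ℤ) < (m : ℤ) :=
      Int.emod_lt_of_pos _ (by exact_mod_cast hm)
    omega⟩

lemma sf_val (k : ℤ) {m : ℕ} (i : Fin m) :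
    ((sf k i : Fin m) : ℕ) = (((i : ℕ) + k) % (m : ℤ)).toNat := rfl

lemma sf_val_int (k : ℤ) {m : ℕ} (i : Fin m) :
    (((sf k i : Fin m) : ℕ) : ℤ) = ((i : ℕ) + k) % (m : ℤ) := by
  have hm : 0 < m := i.pos
  have h1 : 0 ≤ (((i : ℕ) : ℤ) + k) % (m : ℤ) :=
    Int.emod_nonneg _ (by exact_mod_cast hm.ne')
  rw [sf_val]; omega

lemma sf_zero {m : ℕ} (i : Fin m) : sf 0 i = i := by
  have hm : 0 < m := i.pos
  have hlt : ((i : ℕ) : ℤ) < (m : ℤ) := by exact_mod_cast i.isLt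
  apply Fin.ext
  have := sf_val_int 0 i
  rw [add_zero, Int.emod_eq_of_lt (by positivity) hlt] at this
  omega

lemma sf_sf (k l : ℤ) {m : ℕ} (i : Fin m) : sf k (sf l i) = sf (k + l) i := by
  apply Fin.ext
  have h1 := sf_val_int k (sf l i)
  have h2 := sf_val_int l i
  have h3 := sf_val_int (k + l) i
  have : (((sf l i : Fin m) : ℕ) : ℤ) + k = (((i : ℕ) + l) % (m : ℤ)) + k := by rw [h2]
  rw [this, Int.emod_add_emod] at h1
  have : ((i : ℕ) : ℤ) + l + k = ((i : ℕ) : ℤ) + (k + l) := by ring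
  rw [this] at h1
  omega

lemma sf_one_val {m : ℕ} (i : Fin m) : ((sf 1 i : Fin m) : ℕ) = ((i : ℕ) + 1) % m := by
  have hm : 0 < m := i.pos
  have h := sf_val_int 1 i
  zify
  push_cast [Int.natCast_mod] at h ⊢
  omega

lemma sf_eq_self_dvd {m : ℕ} {k : ℤ} {i : Fin m} (h : sf k i = i) : (m : ℤ) ∣ k := by
  have h1 := sf_val_int k i
  rw [h] at h1
  have hsm : ((i : ℕ) : ℤ) % (m : ℤ) = ((i : ℕ) : ℤ) := by
    apply Int.emod_eq_of_lt (by positivity)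
    exact_mod_cast i.isLt
  have : ((i : ℕ) : ℤ) % (m : ℤ) = (((i : ℕ) : ℤ) + k) % (m : ℤ) := by omega
  have hd := Int.ModEq.dvd (this : Int.ModEq (m : ℤ) _ _)
  simpa using hd

end CrownUP
namespace CrownUP

section Shift

variable {J : Type} (U : Ultrafilter J) (M : J → Type*)

/-- Abbreviation for the quotient map into the ultraproduct. -/
def umk (f : ∀ j, M j) : UProd U M := Quotient.mk (uprodSetoid U M) f

lemma umk_surjective : Function.Surjective (umk U M) := Quotient.mk_surjective

lemma umk_eq_iff {f g : ∀ j, M j} : umk U M f = umk U M g ↔ {j | f j = g j} ∈ U :=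
  ⟨Quotient.exact, fun h => Quotient.sound h⟩

lemma rel_umk (r : ∀ j, M j → M j → Prop) (f g : ∀ j, M j) :
    UProd.rel U M r (umk U M f) (umk U M g) ↔ {j | r j (f j) (g j)} ∈ U := Iff.rfl

variable (n : J → ℕ)

/-- The ultraproduct of the index sets `Fin (n j)`. -/
def B : Type := UProd U (fun j => Fin (n j))

/-- Shift by `k` on the ultraproduct of the `Fin (n j)`. -/
def shift (k : ℤ) : B U n → B U n :=
  Quotient.map (fun f j => sf k (f j))
    (fun f g h => Filter.mem_of_superset h (fun j hj => by
      simp only [Set.mem_setOf_eq] at hj ⊢; rw [hj]))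

lemma shift_umk (k : ℤ) (f : ∀ j, Fin (n j)) :
    shift U n k (umk U _ f) = umk U _ (fun j => sf k (f j)) := rfl

lemma shift_shift (k l : ℤ) (b : B U n) :
    shift U n k (shift U n l b) = shift U n (k + l) b := by
  obtain ⟨f, rfl⟩ := umk_surjective U _ b
  rw [shift_umk, shift_umk, shift_umk]
  congr 1
  funext j
  exact sf_sf k l (f j)

lemma shift_zero (b : B U n) : shift U n 0 b = b := by
  obtain ⟨f, rfl⟩ := umk_surjective U _ b
  rw [shift_umk]
  congr 1
  funext j
  exact sf_zero (f j)

lemma shift_injective (k : ℤ) : Function.Injective (shift U n k) := by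
  intro b b' h
  have := congrArg (shift U n (-k)) h
  rwa [shift_shift, shift_shift, neg_add_cancel, shift_zero, shift_zero] at this

variable (hinj : Function.Injective n) (hU : ∀ s : Set J, s.Finite → s ∉ U)

include hinj hU in
lemma shift_free {k : ℤ} {b : B U n} (h : shift U n k b = b) : k = 0 := by
  by_contra hk
  obtain ⟨f, rfl⟩ := umk_surjective U _ b
  rw [shift_umk] at h
  replace h := (umk_eq_iff U _).mp h
  have hsub : {j | sf k (f j) = f j} ⊆ n ⁻¹' (Set.Iic k.natAbs) := by
    intro j hj
    simp only [Set.mem_setOf_eq] at hj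
    have hd : (n j : ℤ) ∣ k := sf_eq_self_dvd hj
    have : n j ∣ k.natAbs := by
      have := Int.natAbs_dvd_natAbs.mpr hd
      simpa using this
    exact Nat.le_of_dvd (Int.natAbs_pos.mpr hk) this
  exact hU _ ((Set.finite_Iic _).preimage hinj.injOn)
    (Filter.mem_of_superset h hsub)

/-- The orbit equivalence relation of the shift action. -/
def orbSetoid : Setoid (B U n) where
  r b b' := ∃ k : ℤ, shift U n k b = b'
  iseqv := by
    refine ⟨fun b => ⟨0, shift_zero U n b⟩, ?_, ?_⟩
    · rintro b b' ⟨k, rfl⟩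
      exact ⟨-k, by rw [shift_shift, neg_add_cancel, shift_zero]⟩
    · rintro b b' b'' ⟨k, rfl⟩ ⟨l, rfl⟩
      exact ⟨l + k, (shift_shift U n l k b).symm⟩

/-- The set of orbits. -/
def Orb : Type := Quotient (orbSetoid U n)

/-- The trivialization map `Orb × ℤ → B`. -/
noncomputable def triv : Orb U n × ℤ → B U n := fun p => shift U n p.2 p.1.out

include hinj hU in
lemma triv_bijective : Function.Bijective (triv U n) := by
  constructor
  · rintro ⟨c, k⟩ ⟨c', k'⟩ h
    simp only [triv] at h
    have hcc : c = c' := by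
      have : (orbSetoid U n) c.out c'.out :=
        ⟨-k' + k, by
          rw [← shift_shift, h, shift_shift, neg_add_cancel, shift_zero]⟩
      have := Quotient.sound this
      erw [Quotient.out_eq, Quotient.out_eq] at this
      exact this
    subst hcc
    have : shift U n (-k' + k) c.out = c.out := by
      rw [← shift_shift, h, shift_shift, neg_add_cancel, shift_zero]
    have := shift_free U n hinj hU this
    have : k = k' := by omega
    rw [this]
  · intro b
    obtain ⟨k, hk⟩ := Quotient.mk_out (s := orbSetoid U n) b
    exact ⟨(Quotient.mk (orbSetoid U n) b, k), hk⟩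

/-- The trivialization `B ≃ Orb × ℤ`. -/
noncomputable def trivE : B U n ≃ Orb U n × ℤ :=
  (Equiv.ofBijective _ (triv_bijective U n hinj hU)).symm

lemma trivE_symm_apply (p : Orb U n × ℤ) :
    (trivE U n hinj hU).symm p = triv U n p := rfl

lemma triv_trivE (b : B U n) : triv U n (trivE U n hinj hU b) = b :=
  (trivE U n hinj hU).symm_apply_apply b

lemma trivE_shift (b : B U n) :
    trivE U n hinj hU (shift U n 1 b) =
      ((trivE U n hinj hU b).1, (trivE U n hinj hU b).2 + 1) := by
  have h1 : triv U n ((trivE U n hinj hU b).1, (trivE U n hinj hU b).2 + 1)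
      = shift U n 1 b := by
    conv_rhs => rw [← triv_trivE U n hinj hU b]
    show shift U n (_ + 1) _ = shift U n 1 (shift U n _ _)
    rw [shift_shift, add_comm]
  rw [← h1]
  exact ((trivE U n hinj hU).apply_symm_apply _)

end Shift

end CrownUP
namespace CrownUP

section Crowns

variable {J : Type} (U : Ultrafilter J) (n : J → ℕ) (h2 : ∀ j, 2 ≤ n j)

/-- The index of an `a`-type element (default `0` otherwise). -/
def aid (f : ∀ j, Crown (n j)) (j : J) : Fin (n j) :=
  Sum.elim id (fun _ => ⟨0, by have := h2 j; omega⟩) (f j).toSum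

/-- The index of a `b`-type element (default `0` otherwise). -/
def bid (f : ∀ j, Crown (n j)) (j : J) : Fin (n j) :=
  Sum.elim (fun _ => ⟨0, by have := h2 j; omega⟩) id (f j).toSum

/-- The coordinates where `f` is of `a`-type. -/
def AS (f : ∀ j, Crown (n j)) : Set J := {j | ∃ i, (f j).toSum = Sum.inl i}

lemma not_AS_iff (f : ∀ j, Crown (n j)) (j : J) :
    j ∉ AS n f ↔ ∃ i, (f j).toSum = Sum.inr i := by
  simp only [AS, Set.mem_setOf_eq]
  rcases (f j).toSum with i | i <;> simp

open Classical in
/-- The decomposition map from the ultraproduct of crowns to `B ⊕ B`. -/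
noncomputable def phi : UProd U (fun j => Crown (n j)) → B U n ⊕ B U n :=
  Quotient.lift
    (fun f => if AS n f ∈ U then Sum.inl (umk U _ (aid n h2 f))
      else Sum.inr (umk U _ (bid n h2 f)))
    (by
      intro f g hfg
      have hE : {j | f j = g j} ∈ U := hfg
      have hAS : AS n f ∈ U ↔ AS n g ∈ U := by
        constructor <;> intro h
        · refine Filter.mem_of_superset (Filter.inter_mem h hE) ?_
          rintro j ⟨⟨i, hi⟩, he⟩
          exact ⟨i, by rw [← he]; exact hi⟩
        · refine Filter.mem_of_superset (Filter.inter_mem h hE) ?_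
          rintro j ⟨⟨i, hi⟩, he⟩
          exact ⟨i, by rw [he]; exact hi⟩
      by_cases h : AS n f ∈ U
      · rw [if_pos h, if_pos (hAS.mp h)]
        congr 1
        apply (umk_eq_iff U _).mpr
        refine Filter.mem_of_superset hE (fun j he => ?_)
        simp only [Set.mem_setOf_eq] at he ⊢
        simp [aid, he]
      · rw [if_neg h, if_neg (fun h' => h (hAS.mpr h'))]
        congr 1
        apply (umk_eq_iff U _).mpr
        refine Filter.mem_of_superset hE (fun j he => ?_)
        simp only [Set.mem_setOf_eq] at he ⊢
        simp [bid, he])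

lemma phi_umk_of_mem {f : ∀ j, Crown (n j)} (h : AS n f ∈ U) :
    phi U n h2 (umk U _ f) = Sum.inl (umk U _ (aid n h2 f)) := by
  simp only [phi, umk, Quotient.lift_mk, if_pos h]
  rfl

lemma phi_umk_of_not_mem {f : ∀ j, Crown (n j)} (h : AS n f ∉ U) :
    phi U n h2 (umk U _ f) = Sum.inr (umk U _ (bid n h2 f)) := by
  simp only [phi, umk, Quotient.lift_mk, if_neg h]
  rfl

/-- The inverse decomposition map. -/
def psi : B U n ⊕ B U n → UProd U (fun j => Crown (n j)) :=
  Sum.elim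
    (Quotient.map (fun u j => Crown.mk (Sum.inl (u j)))
      (fun u v h => Filter.mem_of_superset h (fun j hj => by
        simp only [Set.mem_setOf_eq] at hj ⊢; rw [hj])))
    (Quotient.map (fun u j => Crown.mk (Sum.inr (u j)))
      (fun u v h => Filter.mem_of_superset h (fun j hj => by
        simp only [Set.mem_setOf_eq] at hj ⊢; rw [hj])))

lemma psi_inl (u : ∀ j, Fin (n j)) :
    psi U n (Sum.inl (umk U _ u)) = umk U _ (fun j => Crown.mk (Sum.inl (u j))) := rfl

lemma psi_inr (u : ∀ j, Fin (n j)) :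
    psi U n (Sum.inr (umk U _ u)) = umk U _ (fun j => Crown.mk (Sum.inr (u j))) := rfl

lemma psi_phi (x : UProd U (fun j => Crown (n j))) : psi U n (phi U n h2 x) = x := by
  obtain ⟨f, rfl⟩ := umk_surjective U _ x
  by_cases h : AS n f ∈ U
  · rw [phi_umk_of_mem U n h2 h]
    erw [psi_inl]
    rw [umk_eq_iff]
    refine Filter.mem_of_superset h (fun j hj => ?_)
    obtain ⟨i, hi⟩ := hj
    simp only [Set.mem_setOf_eq]
    have : f j = Crown.mk (Sum.inl i) := by
      cases' hf : f j with s
      rw [hf] at hi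
      simp only at hi
      rw [hi]
    rw [this]
    simp [aid, this]
  · rw [phi_umk_of_not_mem U n h2 h]
    erw [psi_inr]
    rw [umk_eq_iff]
    have h' : (AS n f)ᶜ ∈ U := Ultrafilter.compl_mem_iff_notMem.mpr h
    refine Filter.mem_of_superset h' (fun j hj => ?_)
    obtain ⟨i, hi⟩ := (not_AS_iff n f j).mp hj
    simp only [Set.mem_setOf_eq]
    have : f j = Crown.mk (Sum.inr i) := by
      cases' hf : f j with s
      rw [hf] at hi
      simp only at hi
      rw [hi]
    rw [this]
    simp [bid, this]

lemma phi_psi (y : B U n ⊕ B U n) : phi U n h2 (psi U n y) = y := by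
  rcases y with b | b <;> obtain ⟨u, rfl⟩ := umk_surjective U _ b
  · rw [psi_inl]
    have h : AS n (fun j => Crown.mk (Sum.inl (u j))) ∈ U := by
      have : AS n (fun j => Crown.mk (Sum.inl (u j))) = Set.univ := by
        ext j; simp [AS]
      rw [this]; exact Filter.univ_mem
    rw [phi_umk_of_mem U n h2 h]
    rfl
  · rw [psi_inr]
    have h : AS n (fun j => Crown.mk (Sum.inr (u j))) ∉ U := by
      have : AS n (fun j => Crown.mk (Sum.inr (u j))) = ∅ := by
        ext j; simp [AS]
      rw [this]; exact Ultrafilter.empty_notMem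
    rw [phi_umk_of_not_mem U n h2 h]
    rfl

/-- The decomposition equivalence. -/
noncomputable def phiE : UProd U (fun j => Crown (n j)) ≃ B U n ⊕ B U n where
  toFun := phi U n h2
  invFun := psi U n
  left_inv := psi_phi U n h2
  right_inv := phi_psi U n h2

end Crowns

end CrownUP
namespace CrownUP

section Rel

variable {J : Type} (U : Ultrafilter J) (n : J → ℕ) (h2 : ∀ j, 2 ≤ n j)

lemma rel_iff (x y : UProd U (fun j => Crown (n j))) :
    UProd.rel U (fun j => Crown (n j)) (fun _ u v => u ≤ v) x y ↔
      x = y ∨ ∃ u v : B U n, phi U n h2 x = Sum.inr u ∧ phi U n h2 y = Sum.inl v ∧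
        (v = u ∨ v = shift U n 1 u) := by
  obtain ⟨f, rfl⟩ := umk_surjective U _ x
  obtain ⟨g, rfl⟩ := umk_surjective U _ y
  rw [rel_umk]
  constructor
  · intro h
    set E : Set J := {j | f j = g j} with hE
    set C₀ : Set J := {j | ∃ i i' : Fin (n j), (f j).toSum = Sum.inr i ∧
      (g j).toSum = Sum.inl i' ∧ (i' : ℕ) = (i : ℕ)} with hC₀
    set C₁ : Set J := {j | ∃ i i' : Fin (n j), (f j).toSum = Sum.inr i ∧
      (g j).toSum = Sum.inl i' ∧ (i' : ℕ) = ((i : ℕ) + 1) % (n j)} with hC₁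
    have hsub : {j | f j ≤ g j} ⊆ E ∪ (C₀ ∪ C₁) := by
      intro j hj
      simp only [Set.mem_setOf_eq] at hj
      rcases hj with hj | ⟨i, i', hfi, hgi, hii⟩
      · exact Or.inl hj
      · rcases hii with hii | hii
        · exact Or.inr (Or.inl ⟨i, i', hfi, hgi, hii⟩)
        · exact Or.inr (Or.inr ⟨i, i', hfi, hgi, hii⟩)
    have hmem : E ∪ (C₀ ∪ C₁) ∈ U := Filter.mem_of_superset h hsub
    rcases Ultrafilter.union_mem_iff.mp hmem with hmem | hmem
    · exact Or.inl ((umk_eq_iff U _).mpr hmem)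
    · -- cover case
      right
      have hCb : ∀ (C : Set J), C ⊆ C₀ ∪ C₁ → C ∈ U →
          phi U n h2 (umk U _ f) = Sum.inr (umk U _ (bid n h2 f)) ∧
          phi U n h2 (umk U _ g) = Sum.inl (umk U _ (aid n h2 g)) := by
        intro C hCsub hC
        have hf : AS n f ∉ U := by
          intro hA
          obtain ⟨j, hj1, hj2⟩ := Ultrafilter.nonempty_of_mem (Filter.inter_mem hA hC)
          obtain ⟨i, hi⟩ := hj1
          rcases hCsub hj2 with ⟨i', _, hfi, _⟩ | ⟨i', _, hfi, _⟩ <;>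
            rw [hi] at hfi <;> exact absurd hfi (by simp)
        have hg : AS n g ∈ U := by
          refine Filter.mem_of_superset hC (fun j hj => ?_)
          rcases hCsub hj with ⟨_, i', _, hgi, _⟩ | ⟨_, i', _, hgi, _⟩ <;> exact ⟨i', hgi⟩
        exact ⟨phi_umk_of_not_mem U n h2 hf, phi_umk_of_mem U n h2 hg⟩
      rcases Ultrafilter.union_mem_iff.mp hmem with hmem | hmem
      · obtain ⟨hpf, hpg⟩ := hCb C₀ Set.subset_union_left hmem
        refine ⟨umk U _ (bid n h2 f), umk U _ (aid n h2 g), hpf, hpg, Or.inl ?_⟩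
        apply (umk_eq_iff U _).mpr
        refine Filter.mem_of_superset hmem (fun j hj => ?_)
        obtain ⟨i, i', hfi, hgi, hii⟩ := hj
        simp only [Set.mem_setOf_eq, aid, bid, hfi, hgi, Sum.elim_inl, Sum.elim_inr, id]
        exact Fin.ext hii
      · obtain ⟨hpf, hpg⟩ := hCb C₁ Set.subset_union_right hmem
        refine ⟨umk U _ (bid n h2 f), umk U _ (aid n h2 g), hpf, hpg, Or.inr ?_⟩
        rw [shift_umk]
        apply (umk_eq_iff U _).mpr
        refine Filter.mem_of_superset hmem (fun j hj => ?_)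
        obtain ⟨i, i', hfi, hgi, hii⟩ := hj
        simp only [Set.mem_setOf_eq, aid, bid, hfi, hgi, Sum.elim_inl, Sum.elim_inr, id]
        apply Fin.ext
        rw [sf_one_val]
        exact hii
  · rintro (heq | ⟨u, v, hpf, hpg, hvu⟩)
    · have := (umk_eq_iff U _).mp heq
      refine Filter.mem_of_superset this (fun j hj => ?_)
      simp only [Set.mem_setOf_eq] at hj ⊢
      exact le_of_eq hj
    · -- extract data
      have hfn : AS n f ∉ U := by
        intro hA
        rw [phi_umk_of_mem U n h2 hA] at hpf
        exact absurd hpf (by simp)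
      have hgn : AS n g ∈ U := by
        by_contra hA
        rw [phi_umk_of_not_mem U n h2 hA] at hpg
        exact absurd hpg (by simp)
      rw [phi_umk_of_not_mem U n h2 hfn] at hpf
      rw [phi_umk_of_mem U n h2 hgn] at hpg
      have hu : u = umk U _ (bid n h2 f) := by
        injection hpf with h'; exact h'.symm
      have hv : v = umk U _ (aid n h2 g) := by
        injection hpg with h'; exact h'.symm
      subst hu hv
      have hfc : (AS n f)ᶜ ∈ U := Ultrafilter.compl_mem_iff_notMem.mpr hfn
      rcases hvu with hvu | hvu
      · have hD := (umk_eq_iff U _).mp hvu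
        refine Filter.mem_of_superset
          (Filter.inter_mem (Filter.inter_mem hfc hgn) hD) (fun j hj => ?_)
        obtain ⟨⟨hjf, hjg⟩, hjD⟩ := hj
        obtain ⟨i, hi⟩ := (not_AS_iff n f j).mp hjf
        obtain ⟨i', hi'⟩ := hjg
        simp only [Set.mem_setOf_eq] at hjD ⊢
        refine Or.inr ⟨i, i', hi, hi', Or.inl ?_⟩
        simp only [aid, bid, hi, hi', Sum.elim_inl, Sum.elim_inr, id] at hjD
        rw [hjD]
      · rw [shift_umk] at hvu
        have hD := (umk_eq_iff U _).mp hvu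
        refine Filter.mem_of_superset
          (Filter.inter_mem (Filter.inter_mem hfc hgn) hD) (fun j hj => ?_)
        obtain ⟨⟨hjf, hjg⟩, hjD⟩ := hj
        obtain ⟨i, hi⟩ := (not_AS_iff n f j).mp hjf
        obtain ⟨i', hi'⟩ := hjg
        simp only [Set.mem_setOf_eq] at hjD ⊢
        refine Or.inr ⟨i, i', hi, hi', Or.inr ?_⟩
        simp only [aid, bid, hi, hi', Sum.elim_inl, Sum.elim_inr, id] at hjD
        rw [hjD, sf_one_val]

end Rel

end CrownUP
namespace CrownUP

section Card

variable {J : Type} [Countable J] (U : Ultrafilter J) (n : J → ℕ) (h2 : ∀ j, 2 ≤ n j)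
  (hinj : Function.Injective n) (hU : ∀ s : Set J, s.Finite → s ∉ U)

/-- Binary value of the first `m` bits of `s`. -/
def bv (s : ℕ → Bool) : ℕ → ℕ
  | 0 => 0
  | m + 1 => bv s m + (if s m then 2 ^ m else 0)

lemma bv_lt (s : ℕ → Bool) (m : ℕ) : bv s m < 2 ^ m := by
  induction m with
  | zero => simp [bv]
  | succ m ih =>
    have : (if s m then 2 ^ m else 0) ≤ 2 ^ m := by split <;> omega
    simp only [bv, pow_succ]
    omega

lemma bv_congr {s t : ℕ → Bool} {m : ℕ} (h : ∀ i < m, s i = t i) : bv s m = bv t m := by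
  induction m with
  | zero => rfl
  | succ m ih =>
    simp only [bv]
    rw [ih (fun i hi => h i (by omega)), h m (by omega)]

lemma bv_mod (s : ℕ → Bool) {k m : ℕ} (h : k ≤ m) :
    bv s m % 2 ^ k = bv s k % 2 ^ k := by
  induction m with
  | zero => have : k = 0 := by omega
            subst this; rfl
  | succ m ih =>
    rcases Nat.lt_or_ge k (m + 1) with hk | hk
    · have hk' : k ≤ m := by omega
      have : 2 ^ k ∣ (if s m then 2 ^ m else 0) := by
        split
        · exact pow_dvd_pow 2 hk'
        · exact dvd_zero _
      obtain ⟨d, hd⟩ := this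
      simp only [bv]
      rw [hd, Nat.add_mul_mod_self_left]
      exact ih hk'
    · have : k = m + 1 := by omega
      subst this; rfl

lemma bv_ne {s t : ℕ → Bool} {k : ℕ} (hk : s k ≠ t k) (hlow : ∀ i < k, s i = t i)
    {m : ℕ} (hm : k < m) : bv s m ≠ bv t m := by
  intro h
  have h1 : bv s m % 2 ^ (k + 1) = bv t m % 2 ^ (k + 1) := by rw [h]
  rw [bv_mod s (by omega : k + 1 ≤ m), bv_mod t (by omega : k + 1 ≤ m)] at h1
  rw [Nat.mod_eq_of_lt (bv_lt s (k + 1)), Nat.mod_eq_of_lt (bv_lt t (k + 1))] at h1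
  simp only [bv] at h1
  rw [bv_congr (fun i hi => hlow i hi)] at h1
  rcases Bool.eq_false_or_eq_true (s k) with hs | hs <;>
    rcases Bool.eq_false_or_eq_true (t k) with ht | ht <;>
      simp [hs, ht] at h1 hk

include h2 hinj hU in
lemma mk_B_eq : Cardinal.mk (B U n) = Cardinal.continuum := by
  apply le_antisymm
  · calc Cardinal.mk (B U n) ≤ Cardinal.mk (∀ j, Fin (n j)) := Cardinal.mk_quotient_le
    _ = Cardinal.prod (fun j => Cardinal.mk (Fin (n j))) := Cardinal.mk_pi _
    _ ≤ Cardinal.prod (fun _ : J => Cardinal.aleph0) :=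
        Cardinal.prod_le_prod _ _ (fun j => (Cardinal.mk_le_aleph0))
    _ = Cardinal.aleph0 ^ Cardinal.mk J := Cardinal.prod_const' J _
    _ ≤ Cardinal.aleph0 ^ Cardinal.aleph0 :=
        Cardinal.power_le_power_left Cardinal.aleph0_ne_zero Cardinal.mk_le_aleph0
    _ = Cardinal.continuum := Cardinal.aleph0_power_aleph0
  · have hF : Function.Injective (fun s : ℕ → Bool =>
        umk U (fun j => Fin (n j)) (fun j => ⟨bv s (Nat.log 2 (n j)), by
          have h1 : bv s (Nat.log 2 (n j)) < 2 ^ Nat.log 2 (n j) := bv_lt _ _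
          have h2 : 2 ^ Nat.log 2 (n j) ≤ n j :=
            Nat.pow_log_le_self 2 (by have := h2 j; omega)
          omega⟩)) := by
      intro s t hst
      by_contra hne
      have hex : ∃ k, s k ≠ t k := by
        by_contra hk
        push_neg at hk
        exact hne (funext hk)
      classical
      let k := Nat.find hex
      have hk : s k ≠ t k := Nat.find_spec hex
      have hlow : ∀ i < k, s i = t i := fun i hi => by
        by_contra hc
        exact absurd (Nat.find_le hc) (Nat.not_le.mpr hi)
      have hmem := (umk_eq_iff U _).mp hst
      refine hU _ ((Set.finite_Iic (2 ^ (k + 1))).preimage hinj.injOn)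
        (Filter.mem_of_superset hmem ?_)
      intro j hj
      simp only [Set.mem_setOf_eq, Fin.mk.injEq] at hj
      by_contra hje
      simp only [Set.mem_preimage, Set.mem_Iic, not_le] at hje
      have hklt : k < Nat.log 2 (n j) := by
        by_contra hc
        push_neg at hc
        have : n j ≤ 2 ^ (k + 1) := le_trans (le_of_lt (Nat.lt_pow_succ_log_self
          (by norm_num) (n j))) (Nat.pow_le_pow_right (by norm_num) (by omega))
        omega
      exact bv_ne hk hlow hklt hj
    calc Cardinal.continuum = Cardinal.mk (ℕ → Bool) := by
          rw [Cardinal.mk_arrow]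
          simp [Cardinal.mk_bool, Cardinal.two_power_aleph0]
    _ ≤ Cardinal.mk (B U n) := Cardinal.mk_le_of_injective hF

include h2 hinj hU in
lemma mk_Orb_eq : Cardinal.mk (Orb U n) = Cardinal.continuum := by
  have hBO : Cardinal.mk (B U n) = Cardinal.mk (Orb U n) * Cardinal.aleph0 := by
    rw [Cardinal.mk_congr (trivE U n hinj hU)]
    simp [Cardinal.mk_prod, Cardinal.mk_int]
  have hB := mk_B_eq U n h2 hinj hU
  have hO_le : Cardinal.mk (Orb U n) ≤ Cardinal.continuum := by
    rw [← hB]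
    exact Cardinal.mk_quotient_le
  have hO_ge : Cardinal.aleph0 ≤ Cardinal.mk (Orb U n) := by
    by_contra hc
    push_neg at hc
    have : Cardinal.mk (B U n) ≤ Cardinal.aleph0 := by
      rw [hBO]
      calc Cardinal.mk (Orb U n) * Cardinal.aleph0 ≤ Cardinal.aleph0 * Cardinal.aleph0 :=
            mul_le_mul' (le_of_lt hc) le_rfl
      _ = Cardinal.aleph0 := by simp
    rw [hB] at this
    exact absurd this (not_le.mpr Cardinal.aleph0_lt_continuum)
  rw [hBO, Cardinal.mul_aleph0_eq hO_ge] at hB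
  exact hB

end Card

end CrownUP
namespace CrownUP

/-- The fence as a sum of two copies of `ℤ`. -/
def fenceE : (ℤ ⊕ ℤ) ≃ Fence where
  toFun s := ⟨s⟩
  invFun x := x.toSum
  left_inv s := rfl
  right_inv x := rfl

section Main

variable {J : Type} [Countable J] (U : Ultrafilter J) (n : J → ℕ) (h2 : ∀ j, 2 ≤ n j)
  (hinj : Function.Injective n) (hU : ∀ s : Set J, s.Finite → s ∉ U)

/-- The full structural equivalence onto a product of a component set with the fence. -/
noncomputable def fullE : UProd U (fun j => Crown (n j)) ≃ Orb U n × Fence :=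
  (phiE U n h2).trans
    (((Equiv.sumCongr (trivE U n hinj hU) (trivE U n hinj hU)).trans
      (Equiv.prodSumDistrib (Orb U n) ℤ ℤ).symm).trans
      (Equiv.prodCongr (Equiv.refl _) fenceE))

lemma fullE_of_inl {x : UProd U (fun j => Crown (n j))} {u : B U n}
    (h : phi U n h2 x = Sum.inl u) :
    fullE U n h2 hinj hU x =
      ((trivE U n hinj hU u).1, ⟨Sum.inl (trivE U n hinj hU u).2⟩) := by
  simp only [fullE, Equiv.trans_apply, phiE, Equiv.coe_fn_mk, h,
    Equiv.sumCongr_apply, Sum.map_inl, Equiv.prodSumDistrib]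
  rfl

lemma fullE_of_inr {x : UProd U (fun j => Crown (n j))} {u : B U n}
    (h : phi U n h2 x = Sum.inr u) :
    fullE U n h2 hinj hU x =
      ((trivE U n hinj hU u).1, ⟨Sum.inr (trivE U n hinj hU u).2⟩) := by
  simp only [fullE, Equiv.trans_apply, phiE, Equiv.coe_fn_mk, h,
    Equiv.sumCongr_apply, Sum.map_inr, Equiv.prodSumDistrib]
  rfl

lemma fullE_rel (x y : UProd U (fun j => Crown (n j))) :
    UProd.rel U (fun j => Crown (n j)) (fun _ u v => u ≤ v) x y ↔
      ((fullE U n h2 hinj hU x).1 = (fullE U n h2 hinj hU y).1 ∧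
        (fullE U n h2 hinj hU x).2 ≤ (fullE U n h2 hinj hU y).2) := by
  rw [rel_iff U n h2]
  constructor
  · rintro (rfl | ⟨u, v, hpx, hpy, hvu⟩)
    · exact ⟨rfl, le_refl _⟩
    · rw [fullE_of_inr U n h2 hinj hU hpx, fullE_of_inl U n h2 hinj hU hpy]
      rcases hvu with rfl | rfl
      · exact ⟨rfl, Or.inr ⟨_, _, rfl, rfl, Or.inl rfl⟩⟩
      · rw [trivE_shift U n hinj hU u]
        exact ⟨rfl, Or.inr ⟨_, _, rfl, rfl, Or.inr rfl⟩⟩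
  · rintro ⟨h1, h2'⟩
    rcases h2' with heq | ⟨jj, ss, hx2, hy2, hss⟩
    · left
      apply (fullE U n h2 hinj hU).injective
      exact Prod.ext h1 heq
    · right
      rcases hpx : phi U n h2 x with u | u
      · rw [fullE_of_inl U n h2 hinj hU hpx] at hx2
        exact absurd hx2 (by simp)
      rcases hpy : phi U n h2 y with v | v
      case inr.inr =>
        rw [fullE_of_inr U n h2 hinj hU hpy] at hy2
        simp only at hy2
        exact absurd hy2 (by simp)
      rw [fullE_of_inr U n h2 hinj hU hpx] at hx2 h1
      rw [fullE_of_inl U n h2 hinj hU hpy] at hy2 h1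
      simp only at hx2 hy2 h1
      refine ⟨u, v, rfl, rfl, ?_⟩
      have hju : (trivE U n hinj hU u).2 = jj := Sum.inr.inj hx2
      have hsv : (trivE U n hinj hU v).2 = ss := Sum.inl.inj hy2
      rcases hss with hss | hss
      · left
        apply (trivE U n hinj hU).injective
        exact Prod.ext h1.symm (by rw [hsv, hss, hju])
      · right
        apply (trivE U n hinj hU).injective
        rw [trivE_shift U n hinj hU u]
        exact Prod.ext h1.symm (by rw [hsv, hss, hju])

include h2 hinj hU in
/-- The structure theorem for an ultraproduct of crowns over a nonprincipal ultrafilter. -/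
lemma crown_structure :
    ∃ (ι : Type) (e : UProd U (fun j => Crown (n j)) ≃ ι × Fence),
      Cardinal.mk ι = Cardinal.continuum ∧
      ∀ x y, UProd.rel U (fun j => Crown (n j)) (fun _ u v => u ≤ v) x y ↔
        ((e x).1 = (e y).1 ∧ (e x).2 ≤ (e y).2) :=
  ⟨Orb U n, fullE U n h2 hinj hU, mk_Orb_eq U n h2 hinj hU, fullE_rel U n h2 hinj hU⟩

end Main

end CrownUP

/-- The ultraproducts of the even crowns `K n` (`n ∈ {2, 4, 6, …}`) and of the odd crowns
`K n` (`n ∈ {3, 5, 7, …}`) modulo nonprincipal ultrafilters are isomorphic partially ordered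
sets; moreover, each of them has cardinality `2 ^ ℵ₀` and is a cardinal (disjoint) sum of
`2 ^ ℵ₀` copies of the infinite fence. -/
theorem ultraproducts_of_even_and_odd_crowns
    (U₀ : Ultrafilter {n : ℕ // 2 ≤ n ∧ Even n})
    (U₁ : Ultrafilter {n : ℕ // 3 ≤ n ∧ Odd n})
    (h₀ : ∀ s : Set {n : ℕ // 2 ≤ n ∧ Even n}, s.Finite → s ∉ U₀)
    (h₁ : ∀ s : Set {n : ℕ // 3 ≤ n ∧ Odd n}, s.Finite → s ∉ U₁) :
    (∃ e : UProd U₀ (fun j => Crown j.1) ≃ UProd U₁ (fun j => Crown j.1),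
      ∀ x y, UProd.rel U₀ (fun j => Crown j.1) (fun _ u v => u ≤ v) x y ↔
        UProd.rel U₁ (fun j => Crown j.1) (fun _ u v => u ≤ v) (e x) (e y)) ∧
    Cardinal.mk (UProd U₀ (fun j => Crown j.1)) = Cardinal.continuum ∧
    Cardinal.mk (UProd U₁ (fun j => Crown j.1)) = Cardinal.continuum ∧
    (∃ (ι : Type) (e : UProd U₀ (fun j => Crown j.1) ≃ ι × Fence),
      Cardinal.mk ι = Cardinal.continuum ∧
      ∀ x y, UProd.rel U₀ (fun j => Crown j.1) (fun _ u v => u ≤ v) x y ↔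
        ((e x).1 = (e y).1 ∧ (e x).2 ≤ (e y).2)) ∧
    (∃ (ι : Type) (e : UProd U₁ (fun j => Crown j.1) ≃ ι × Fence),
      Cardinal.mk ι = Cardinal.continuum ∧
      ∀ x y, UProd.rel U₁ (fun j => Crown j.1) (fun _ u v => u ≤ v) x y ↔
        ((e x).1 = (e y).1 ∧ (e x).2 ≤ (e y).2)) := by
  obtain ⟨ι₀, e₀, hc₀, hr₀⟩ := CrownUP.crown_structure U₀ (fun j => j.1)
    (fun j => j.2.1) (fun a b h => Subtype.ext h) h₀
  obtain ⟨ι₁, e₁, hc₁, hr₁⟩ := CrownUP.crown_structure U₁ (fun j => j.1)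
    (fun j => le_trans (by norm_num) j.2.1) (fun a b h => Subtype.ext h) h₁
  have hfence : Cardinal.mk Fence = Cardinal.aleph0 := by
    rw [← Cardinal.mk_congr CrownUP.fenceE]
    simp [Cardinal.mk_sum, Cardinal.mk_int]
  have hcard : ∀ {ι : Type}, Cardinal.mk ι = Cardinal.continuum →
      Cardinal.mk (ι × Fence) = Cardinal.continuum := by
    intro ι hι
    rw [Cardinal.mk_prod, Cardinal.lift_id, Cardinal.lift_id, hι, hfence]
    exact Cardinal.mul_aleph0_eq Cardinal.aleph0_le_continuum
  obtain ⟨c⟩ := Cardinal.eq.mp (hc₀.trans hc₁.symm)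
  refine ⟨⟨e₀.trans ((Equiv.prodCongr c (Equiv.refl Fence)).trans e₁.symm), ?_⟩,
    ?_, ?_, ⟨ι₀, e₀, hc₀, hr₀⟩, ⟨ι₁, e₁, hc₁, hr₁⟩⟩
  · intro x y
    rw [hr₀ x y, hr₁]
    simp only [Equiv.trans_apply, Equiv.apply_symm_apply, Equiv.prodCongr_apply,
      Prod.map_fst, Prod.map_snd, Equiv.refl_apply, id_eq]
    exact (and_congr c.injective.eq_iff.symm Iff.rfl)
  · rw [Cardinal.mk_congr e₀]
    exact hcard hc₀
  · rw [Cardinal.mk_congr e₁]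
    exact hcard hc₁
end

section
/- Let D be a finite distributive lattice satisfying the Two-cover Property. Then D satisfies the Decomposable Cyclic Elements Property if and only if for every multicyclic element x of D there exist VW-elements y, z of D such that x = y ∨ z and maxJ(D) ∩ ↓y ∩ ↓z = ∅. -/
section LatticeDefs

variable {α : Type*} [Lattice α] [OrderBot α]

/-- An element of a lattice with least element `⊥` is *join-irreducible* if it is not the
least element and `x = y ⊔ z` implies `x = y` or `x = z`. -/
def JoinIrred (x : α) : Prop :=
  x ≠ ⊥ ∧ ∀ y z : α, x = y ⊔ z → x = y ∨ x = z

variable (α) in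
/-- The set of maximal elements of the poset of join-irreducible elements. -/
def maxJI : Set α :=
  {a | JoinIrred a ∧ ∀ b : α, JoinIrred b → a ≤ b → a = b}

/-- `c` is covered by `a` in the poset of join-irreducible elements. -/
def JCovBy (c a : α) : Prop :=
  JoinIrred c ∧ JoinIrred a ∧ c < a ∧ ∀ d : α, JoinIrred d → c < d → d < a → False

variable (α) in
/-- The *Two-cover Property*: every join-irreducible element has at most two covers in the
poset of join-irreducible elements. -/
def TwoCoverProperty : Prop :=
  ∀ x y z w : α, JCovBy x y → JCovBy x z → JCovBy x w → y = z ∨ y = w ∨ z = w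

variable (α) in
/-- The *Bipartite Maximal Elements Property*: the set of maximal join-irreducible elements
is the disjoint union of two nonempty subsets such that no two distinct elements of the same
subset have a common lower cover in the poset of join-irreducible elements. -/
def BipartiteMaxElements : Prop :=
  ∃ A B : Set α, A.Nonempty ∧ B.Nonempty ∧ Disjoint A B ∧ A ∪ B = maxJI α ∧
    (∀ a ∈ A, ∀ b ∈ A, a ≠ b → ¬∃ c : α, JCovBy c a ∧ JCovBy c b) ∧
    (∀ a ∈ B, ∀ b ∈ B, a ≠ b → ¬∃ c : α, JCovBy c a ∧ JCovBy c b)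

/-- A *cyclic element*: the join of pairwise distinct maximal join-irreducible elements
`a 0, …, a (n-1)` (`n ≥ 3`) such that for `i < j`, some join-irreducible element lies below
both `a i` and `a j` if and only if `j = i + 1` or `(i, j) = (0, n - 1)`. -/
def IsCyclicElem (x : α) : Prop :=
  ∃ n : ℕ, 3 ≤ n ∧ ∃ a : Fin n → α, Function.Injective a ∧ (∀ i, a i ∈ maxJI α) ∧
    x = Finset.univ.sup a ∧
    ∀ i j : Fin n, i < j →
      ((∃ c : α, JoinIrred c ∧ c ≤ a i ∧ c ≤ a j) ↔
        ((j : ℕ) = (i : ℕ) + 1 ∨ ((i : ℕ) = 0 ∧ (j : ℕ) = n - 1)))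

/-- A *V-set* of `x`: a two-element subset of `maxJI α ∩ ↓x` whose two elements have a
common join-irreducible lower bound. -/
def IsVSet (x : α) (S : Set α) : Prop :=
  ∃ a₀ a₁ : α, a₀ ≠ a₁ ∧ S = {a₀, a₁} ∧ a₀ ∈ maxJI α ∧ a₁ ∈ maxJI α ∧ a₀ ≤ x ∧ a₁ ≤ x ∧
    ∃ c : α, JoinIrred c ∧ c ≤ a₀ ∧ c ≤ a₁

/-- A *W-set* of `x`: a four-element subset `{a 0, a 1, a 2, a 3}` of `maxJI α ∩ ↓x` such
that for `i < j`, some join-irreducible element lies below both `a i` and `a j` if and only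
if `j = i + 1`. -/
def IsWSet (x : α) (S : Set α) : Prop :=
  ∃ a : Fin 4 → α, Function.Injective a ∧ S = Set.range a ∧
    (∀ i, a i ∈ maxJI α ∧ a i ≤ x) ∧
    ∀ i j : Fin 4, i < j →
      ((∃ c : α, JoinIrred c ∧ c ≤ a i ∧ c ≤ a j) ↔ (j : ℕ) = (i : ℕ) + 1)

/-- A *VW-element*: a nonzero element `x` which is the join of `maxJI α ∩ ↓x`, such that
each element of `maxJI α ∩ ↓x` either belongs to a unique V-set of `x` and to no W-set of
`x`, or belongs to a unique W-set of `x` and to no V-set of `x`. -/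
def IsVWElem (x : α) : Prop :=
  x ≠ ⊥ ∧ IsLUB (maxJI α ∩ Set.Iic x) x ∧
    ∀ y ∈ maxJI α ∩ Set.Iic x,
      ((∃! S : Set α, IsVSet x S ∧ y ∈ S) ∧ ¬∃ S : Set α, IsWSet x S ∧ y ∈ S) ∨
      ((∃! S : Set α, IsWSet x S ∧ y ∈ S) ∧ ¬∃ S : Set α, IsVSet x S ∧ y ∈ S)

variable (α) in
/-- The *Decomposable Cyclic Elements Property*: each cyclic element `x` is the join of two
VW-elements `y`, `z` with `maxJI α ∩ ↓y ∩ ↓z = ∅`. -/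
def DecomposableCyclicElements : Prop :=
  ∀ x : α, IsCyclicElem x →
    ∃ y z : α, IsVWElem y ∧ IsVWElem z ∧ x = y ⊔ z ∧
      maxJI α ∩ Set.Iic y ∩ Set.Iic z = ∅

end LatticeDefs

section Multicyclic

variable {α : Type*} [Lattice α] [OrderBot α]

/-- The edge relation on maximal join-irreducible elements: `u E v` iff `u ≠ v` and some
join-irreducible element lies below both `u` and `v`. -/
def EdgeRel (u v : α) : Prop :=
  u ≠ v ∧ ∃ c : α, JoinIrred c ∧ c ≤ u ∧ c ≤ v

/-- A *multicyclic element*: `maxJI α ∩ ↓x` is nonempty, `x` is its join, and in the graph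
on `maxJI α ∩ ↓x` with edges given by `EdgeRel`, every vertex has exactly two neighbors. -/
def IsMulticyclic (x : α) : Prop :=
  (maxJI α ∩ Set.Iic x).Nonempty ∧ IsLUB (maxJI α ∩ Set.Iic x) x ∧
    ∀ y ∈ maxJI α ∩ Set.Iic x,
      ∃ u v : α, u ∈ maxJI α ∩ Set.Iic x ∧ v ∈ maxJI α ∩ Set.Iic x ∧ u ≠ v ∧
        EdgeRel y u ∧ EdgeRel y v ∧
        ∀ w ∈ maxJI α ∩ Set.Iic x, EdgeRel y w → w = u ∨ w = v

end Multicyclic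

section Aux
variable {D : Type*} [DistribLattice D] [OrderBot D]

theorem JoinIrred.le_sup' {p a b : D} (hp : JoinIrred p) (h : p ≤ a ⊔ b) :
    p ≤ a ∨ p ≤ b := by
  have h1 : p = (p ⊓ a) ⊔ (p ⊓ b) := by
    rw [← inf_sup_left, inf_eq_left.mpr h]
  rcases hp.2 _ _ h1 with h2 | h2
  · exact Or.inl (by rw [h2]; exact inf_le_right)
  · exact Or.inr (by rw [h2]; exact inf_le_right)

theorem JoinIrred.le_finsetSup {p : D} (hp : JoinIrred p) {ι : Type*} {s : Finset ι}
    {f : ι → D} (h : p ≤ s.sup f) : ∃ i ∈ s, p ≤ f i := by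
  classical
  induction s using Finset.induction_on with
  | empty => exact absurd (le_bot_iff.mp h) hp.1
  | insert _ _ hni ih =>
    rw [Finset.sup_insert] at h
    rcases hp.le_sup' h with h | h
    · exact ⟨_, Finset.mem_insert_self _ _, h⟩
    · obtain ⟨i, hi, hpi⟩ := ih h
      exact ⟨i, Finset.mem_insert_of_mem hi, hpi⟩

theorem EdgeRel.symm {a b : D} (h : EdgeRel a b) : EdgeRel b a :=
  ⟨h.1.symm, h.2.imp fun c ⟨h1, h2, h3⟩ => ⟨h1, h3, h2⟩⟩

/-- max JI elements below a sup of max JI elements are exactly the suprema constituents -/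
theorem maxJI_inter_Iic_sup {ι : Type*} (s : Finset ι) (f : ι → D)
    (hf : ∀ i ∈ s, f i ∈ maxJI D) :
    maxJI D ∩ Set.Iic (s.sup f) = f '' s := by
  ext m
  constructor
  · rintro ⟨hm, hle⟩
    obtain ⟨i, hi, hpi⟩ := hm.1.le_finsetSup hle
    exact ⟨i, hi, (hm.2 _ (hf i hi).1 hpi).symm⟩
  · rintro ⟨i, hi, rfl⟩
    exact ⟨hf i hi, Finset.le_sup hi⟩

theorem isLUB_finsetSup {ι : Type*} (s : Finset ι) (f : ι → D) :
    IsLUB (f '' s) (s.sup f) := by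
  constructor
  · rintro m ⟨i, hi, rfl⟩
    exact Finset.le_sup hi
  · intro b hb
    exact Finset.sup_le fun i hi => hb ⟨i, hi, rfl⟩

theorem maxJI_le_sup_cases {m y z : D} (hm : m ∈ maxJI D) (h : m ≤ y ⊔ z) :
    m ≤ y ∨ m ≤ z := hm.1.le_sup' h

end Aux
section Combine
variable {D : Type*} [DistribLattice D] [OrderBot D]

theorem vset_transfer {y z m : D} 
    (hd : maxJI D ∩ Set.Iic y ∩ Set.Iic z = ∅)
    (hne : ∀ a ∈ maxJI D ∩ Set.Iic y, ∀ b ∈ maxJI D ∩ Set.Iic z, ¬ EdgeRel a b)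
    (hm : m ∈ maxJI D ∩ Set.Iic y) (S : Set D) :
    (IsVSet (y ⊔ z) S ∧ m ∈ S) ↔ (IsVSet y S ∧ m ∈ S) := by
  constructor
  · rintro ⟨⟨a₀, a₁, hne01, rfl, hm0, hm1, hle0, hle1, c, hc, hc0, hc1⟩, hmS⟩
    -- claim: both a₀ a₁ ≤ y
    have key : ∀ a b : D, a ∈ maxJI D → b ∈ maxJI D → a ≤ y → a ≠ b →
        b ≤ y ⊔ z → (∃ c : D, JoinIrred c ∧ c ≤ a ∧ c ≤ b) → b ≤ y := by
      intro a b ha hb hay hab hbyz ⟨c', hc'⟩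
      rcases hb.1.le_sup' hbyz with h | h
      · exact h
      · exact absurd ⟨hab, c', hc'⟩ (hne a ⟨ha, hay⟩ b ⟨hb, h⟩)
    simp only [Set.mem_insert_iff, Set.mem_singleton_iff] at hmS
    rcases hmS with h | h
    · subst h
      have h1 : a₁ ≤ y := key _ _ hm0 hm1 hm.2 hne01 hle1 ⟨c, hc, hc0, hc1⟩
      exact ⟨⟨m, a₁, hne01, rfl, hm0, hm1, hm.2, h1, c, hc, hc0, hc1⟩, Or.inl rfl⟩
    · subst h
      have h0 : a₀ ≤ y := key _ _ hm1 hm0 hm.2 (Ne.symm hne01) hle0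
        ⟨c, hc, hc1, hc0⟩
      exact ⟨⟨a₀, m, hne01, rfl, hm0, hm1, h0, hm.2, c, hc, hc0, hc1⟩, Or.inr rfl⟩
  · rintro ⟨⟨a₀, a₁, hne01, rfl, hm0, hm1, hle0, hle1, hc⟩, hmS⟩
    exact ⟨⟨a₀, a₁, hne01, rfl, hm0, hm1, hle0.trans le_sup_left,
      hle1.trans le_sup_left, hc⟩, hmS⟩

theorem wset_transfer {y z m : D}
    (hd : maxJI D ∩ Set.Iic y ∩ Set.Iic z = ∅)
    (hne : ∀ a ∈ maxJI D ∩ Set.Iic y, ∀ b ∈ maxJI D ∩ Set.Iic z, ¬ EdgeRel a b)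
    (hm : m ∈ maxJI D ∩ Set.Iic y) (S : Set D) :
    (IsWSet (y ⊔ z) S ∧ m ∈ S) ↔ (IsWSet y S ∧ m ∈ S) := by
  constructor
  · rintro ⟨⟨a, hinj, rfl, hmem, hedge⟩, hmS⟩
    obtain ⟨i₀, hi₀⟩ := hmS
    -- each a j is ≤ y or ≤ z, exclusively
    have hsplit : ∀ j, a j ≤ y ∨ a j ≤ z := fun j => (hmem j).1.1.le_sup' (hmem j).2
    have hnotboth : ∀ j, a j ≤ y → a j ≤ z → False := by
      intro j h1 h2
      have : a j ∈ maxJI D ∩ Set.Iic y ∩ Set.Iic z := ⟨⟨(hmem j).1, h1⟩, h2⟩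
      rw [hd] at this; exact this
    have hstep : ∀ i j : Fin 4, i < j → (j : ℕ) = (i : ℕ) + 1 →
        (a i ≤ y ↔ a j ≤ y) := by
      intro i j hij hsucc
      obtain ⟨c, hc, hci, hcj⟩ := (hedge i j hij).mpr hsucc
      have hanij : a i ≠ a j := fun h => absurd (hinj h) (ne_of_lt hij)
      constructor
      · intro h
        rcases hsplit j with h' | h'
        · exact h'
        · exact absurd ⟨hanij, c, hc, hci, hcj⟩
            (hne _ ⟨(hmem i).1, h⟩ _ ⟨(hmem j).1, h'⟩)
      · intro h
        rcases hsplit i with h' | h'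
        · exact h'
        · exact absurd ⟨hanij.symm, c, hc, hcj, hci⟩
            (hne _ ⟨(hmem j).1, h⟩ _ ⟨(hmem i).1, h'⟩)
    have h01 := hstep 0 1 (by decide) rfl
    have h12 := hstep 1 2 (by decide) rfl
    have h23 := hstep 2 3 (by decide) rfl
    have hall : ∀ j, a j ≤ y := by
      have h0 : a i₀ ≤ y := hi₀ ▸ hm.2
      have : a 0 ≤ y := by fin_cases i₀ <;> simp_all
      intro j; fin_cases j
      · exact this
      · exact h01.mp this
      · exact h12.mp (h01.mp this)
      · exact h23.mp (h12.mp (h01.mp this))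
    exact ⟨⟨a, hinj, rfl, fun i => ⟨(hmem i).1, hall i⟩, hedge⟩, ⟨i₀, hi₀⟩⟩
  · rintro ⟨⟨a, hinj, rfl, hmem, hedge⟩, hmS⟩
    exact ⟨⟨a, hinj, rfl, fun i => ⟨(hmem i).1, (hmem i).2.trans le_sup_left⟩,
      hedge⟩, hmS⟩

theorem vw_cond_transfer {y z m : D}
    (hd : maxJI D ∩ Set.Iic y ∩ Set.Iic z = ∅)
    (hne : ∀ a ∈ maxJI D ∩ Set.Iic y, ∀ b ∈ maxJI D ∩ Set.Iic z, ¬ EdgeRel a b)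
    (hm : m ∈ maxJI D ∩ Set.Iic y) (hy : IsVWElem y) :
    ((∃! S : Set D, IsVSet (y ⊔ z) S ∧ m ∈ S) ∧ ¬∃ S : Set D, IsWSet (y ⊔ z) S ∧ m ∈ S) ∨
    ((∃! S : Set D, IsWSet (y ⊔ z) S ∧ m ∈ S) ∧ ¬∃ S : Set D, IsVSet (y ⊔ z) S ∧ m ∈ S) := by
  have hV := vset_transfer hd hne hm
  have hW := wset_transfer hd hne hm
  rcases hy.2.2 m hm with ⟨h1, h2⟩ | ⟨h1, h2⟩
  · exact Or.inl ⟨(existsUnique_congr hV).mpr h1, fun ⟨S, hS⟩ => h2 ⟨S, (hW S).mp hS⟩⟩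
  · exact Or.inr ⟨(existsUnique_congr hW).mpr h1, fun ⟨S, hS⟩ => h2 ⟨S, (hV S).mp hS⟩⟩

theorem IsVWElem.sup_of_disjoint {y z : D} (hy : IsVWElem y) (hz : IsVWElem z)
    (hd : maxJI D ∩ Set.Iic y ∩ Set.Iic z = ∅)
    (hne : ∀ a ∈ maxJI D ∩ Set.Iic y, ∀ b ∈ maxJI D ∩ Set.Iic z, ¬ EdgeRel a b) :
    IsVWElem (y ⊔ z) := by
  have hset : maxJI D ∩ Set.Iic (y ⊔ z) =
      (maxJI D ∩ Set.Iic y) ∪ (maxJI D ∩ Set.Iic z) := by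
    ext m
    constructor
    · rintro ⟨hm, hle⟩
      rcases hm.1.le_sup' hle with h | h
      · exact Or.inl ⟨hm, h⟩
      · exact Or.inr ⟨hm, h⟩
    · rintro (⟨hm, h⟩ | ⟨hm, h⟩)
      · exact ⟨hm, h.trans le_sup_left⟩
      · exact ⟨hm, h.trans le_sup_right⟩
  refine ⟨fun h => hy.1 (le_bot_iff.mp (le_sup_left.trans h.le)), ?_, ?_⟩
  · rw [hset]; exact hy.2.1.union hz.2.1
  · intro m hm
    rw [hset] at hm
    have hd' : maxJI D ∩ Set.Iic z ∩ Set.Iic y = ∅ := by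
      rw [← hd]; ext u; constructor <;> rintro ⟨⟨h1, h2⟩, h3⟩ <;> exact ⟨⟨h1, h3⟩, h2⟩
    have hne' : ∀ a ∈ maxJI D ∩ Set.Iic z, ∀ b ∈ maxJI D ∩ Set.Iic y, ¬ EdgeRel a b :=
      fun a ha b hb h => hne b hb a ha h.symm
    rcases hm with hm | hm
    · exact vw_cond_transfer hd hne hm hy
    · rw [sup_comm]
      exact vw_cond_transfer hd' hne' hm hz

end Combine
section CyclicMulti
variable {D : Type*} [DistribLattice D] [OrderBot D]

theorem IsCyclicElem.isMulticyclic {x : D} (h : IsCyclicElem x) : IsMulticyclic x := by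
  obtain ⟨n, hn3, a, hinj, hmax, hx, hedge⟩ := h
  have hS : maxJI D ∩ Set.Iic x = Set.range a := by
    rw [hx, maxJI_inter_Iic_sup Finset.univ a (fun i _ => hmax i)]
    simp [Set.image_univ]
  have hnpos : 0 < n := by omega
  have hADJ : ∀ i j : Fin n, i ≠ j → (EdgeRel (a i) (a j) ↔
      ((j : ℕ) = (i : ℕ) + 1 ∨ (i : ℕ) = (j : ℕ) + 1 ∨
       ((i : ℕ) = 0 ∧ (j : ℕ) = n - 1) ∨ ((j : ℕ) = 0 ∧ (i : ℕ) = n - 1))) := by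
    intro i j hij
    have hane : a i ≠ a j := fun hh => hij (hinj hh)
    rcases lt_or_gt_of_ne hij with hlt | hlt
    · have hiff := hedge i j hlt
      have hvlt : (i : ℕ) < (j : ℕ) := hlt
      constructor
      · intro he
        have := hiff.mp he.2
        omega
      · intro hr
        have : (j : ℕ) = (i : ℕ) + 1 ∨ ((i : ℕ) = 0 ∧ (j : ℕ) = n - 1) := by omega
        exact ⟨hane, hiff.mpr this⟩
    · have hiff := hedge j i hlt
      have hvlt : (j : ℕ) < (i : ℕ) := hlt
      constructor
      · intro he
        have := hiff.mp he.symm.2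
        omega
      · intro hr
        have : (i : ℕ) = (j : ℕ) + 1 ∨ ((j : ℕ) = 0 ∧ (i : ℕ) = n - 1) := by omega
        obtain ⟨c, hc⟩ := hiff.mpr this
        exact ⟨hane, c, hc.1, hc.2.2, hc.2.1⟩
  have hlub : IsLUB (maxJI D ∩ Set.Iic x) x := by
    rw [hS, hx]
    have := isLUB_finsetSup Finset.univ a
    simpa [Set.image_univ] using this
  refine ⟨?_, hlub, ?_⟩
  · rw [hS]; exact ⟨a ⟨0, hnpos⟩, Set.mem_range_self _⟩
  · intro y hy
    rw [hS] at hy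
    obtain ⟨i, rfl⟩ := hy
    set ipv : ℕ := if (i : ℕ) + 1 = n then 0 else (i : ℕ) + 1 with hipv_def
    set imv : ℕ := if (i : ℕ) = 0 then n - 1 else (i : ℕ) - 1 with himv_def
    have hiv : (i : ℕ) < n := i.2
    have hipv : ipv < n := by rw [hipv_def]; split <;> omega
    have himv : imv < n := by rw [himv_def]; split <;> omega
    have hfacts : (ipv = 0 ∧ (i:ℕ) + 1 = n ∨ ipv = (i:ℕ)+1 ∧ (i:ℕ)+1 ≠ n) ∧
        (imv = n - 1 ∧ (i:ℕ) = 0 ∨ imv = (i:ℕ) - 1 ∧ (i:ℕ) ≠ 0) := by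
      constructor
      · rw [hipv_def]; split <;> simp_all
      · rw [himv_def]; split <;> simp_all
    refine ⟨a ⟨ipv, hipv⟩, a ⟨imv, himv⟩, ⟨hmax _, ?_⟩, ⟨hmax _, ?_⟩, ?_, ?_, ?_, ?_⟩
    · rw [hx]; exact Finset.le_sup (Finset.mem_univ _)
    · rw [hx]; exact Finset.le_sup (Finset.mem_univ _)
    · intro hh
      have := hinj hh
      have : ipv = imv := congrArg Fin.val this
      omega
    · refine (hADJ i ⟨ipv, hipv⟩ ?_).mpr ?_
      · intro hh; have := congrArg Fin.val hh; simp at this; omega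
      · simp only [Fin.val_mk]; omega
    · refine (hADJ i ⟨imv, himv⟩ ?_).mpr ?_
      · intro hh; have := congrArg Fin.val hh; simp at this; omega
      · simp only [Fin.val_mk]; omega
    · intro w hw hew
      rw [hS] at hw
      obtain ⟨k, rfl⟩ := hw
      have hik : i ≠ k := fun hh => hew.1 (congrArg a hh)
      have h4 := (hADJ i k hik).mp hew
      have hkv : (k : ℕ) < n := k.2
      have : (k : ℕ) = ipv ∨ (k : ℕ) = imv := by omega
      rcases this with hh | hh
      · exact Or.inl (congrArg a (Fin.ext hh))
      · exact Or.inr (congrArg a (Fin.ext hh))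

end CyclicMulti
section Extract
variable {D : Type*} [DistribLattice D] [OrderBot D] [Fintype D]

theorem multicyclic_structure {x : D} (h : IsMulticyclic x) :
    ∃ N : ℕ, 3 ≤ N ∧ ∃ a : Fin N → D,
      Function.Injective a ∧ (∀ i, a i ∈ maxJI D ∩ Set.Iic x) ∧
      (∀ i j : Fin N, i < j →
        ((∃ c : D, JoinIrred c ∧ c ≤ a i ∧ c ≤ a j) ↔
          ((j : ℕ) = (i : ℕ) + 1 ∨ ((i : ℕ) = 0 ∧ (j : ℕ) = N - 1)))) ∧
      (∀ w ∈ maxJI D ∩ Set.Iic x, w ∉ Set.range a → ∀ i, ¬ EdgeRel (a i) w) := by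
  classical
  set S := maxJI D ∩ Set.Iic x with hSdef
  obtain ⟨hne, hlub, hreg⟩ := h
  -- the "other neighbor" function
  have hex : ∀ p y : D, ∃ w : D, y ∈ S → p ∈ S → EdgeRel y p →
      w ∈ S ∧ EdgeRel y w ∧ w ≠ p ∧ ∀ w' ∈ S, EdgeRel y w' → w' = p ∨ w' = w := by
    intro p y
    by_cases hy : y ∈ S
    · by_cases hp : p ∈ S
      · by_cases hyp : EdgeRel y p
        · obtain ⟨u, v, hu, hv, huv, heu, hev, hun⟩ := hreg y hy
          rcases hun p hp hyp with rfl | rfl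
          · exact ⟨v, fun _ _ _ => ⟨hv, hev, fun hh => huv hh.symm,
              fun w' hw' he' => (hun w' hw' he')⟩⟩
          · refine ⟨u, fun _ _ _ => ⟨hu, heu, huv, fun w' hw' he' => ?_⟩⟩
            rcases hun w' hw' he' with hh | hh
            · exact Or.inr hh
            · exact Or.inl hh
        · exact ⟨y, fun _ _ hh => absurd hh hyp⟩
      · exact ⟨y, fun _ hh _ => absurd hh hp⟩
    · exact ⟨y, fun hh _ _ => absurd hh hy⟩
  choose nxt hnxt using hex
  obtain ⟨s, hs⟩ := hne
  obtain ⟨u₀, v₀, hu₀, hv₀, huv₀, heu₀, hev₀, hun₀⟩ := hreg s hs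
  -- the walk
  let g : ℕ → D × D := fun k => Nat.rec (s, u₀) (fun _ pr => (pr.2, nxt pr.1 pr.2)) k
  let f : ℕ → D := fun k => (g k).1
  have hf0 : f 0 = s := rfl
  have hf1 : ∀ k, f (k + 1) = (g k).2 := fun k => rfl
  have hf10 : f 1 = u₀ := rfl
  have hf2 : ∀ k, f (k + 2) = nxt (f k) (f (k + 1)) := fun k => rfl
  have hQ : ∀ k, f k ∈ S ∧ f (k + 1) ∈ S ∧ EdgeRel (f k) (f (k + 1)) := by
    intro k
    induction k with
    | zero => exact ⟨hs, hu₀, heu₀⟩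
    | succ k ih =>
      obtain ⟨h1, h2, h3⟩ := ih
      have := hnxt (f k) (f (k + 1)) h2 h1 h3.symm
      rw [← hf2 k] at this
      exact ⟨h2, this.1, this.2.1⟩
  have hmemS : ∀ k, f k ∈ S := fun k => (hQ k).1
  have hE : ∀ k, EdgeRel (f k) (f (k + 1)) := fun k => (hQ k).2.2
  have hno : ∀ k, f (k + 2) ≠ f k := by
    intro k
    have := hnxt (f k) (f (k + 1)) (hQ k).2.1 (hQ k).1 (hE k).symm
    rw [← hf2 k] at this
    exact this.2.2.1
  have huniq : ∀ k, ∀ w ∈ S, EdgeRel (f (k + 1)) w → w = f k ∨ w = f (k + 2) := by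
    intro k w hw hew
    have := hnxt (f k) (f (k + 1)) (hQ k).2.1 (hQ k).1 (hE k).symm
    rw [← hf2 k] at this
    exact this.2.2.2 w hw hew
  have huniq0 : ∀ w ∈ S, EdgeRel (f 0) w → w = f 1 ∨ w = v₀ := by
    intro w hw hew
    rw [hf0] at hew
    rcases hun₀ w hw hew with hh | hh
    · exact Or.inl (by rw [hh, hf10])
    · exact Or.inr hh
  -- pigeonhole
  have hEx : ∃ m : ℕ, ∃ j, j < m ∧ f m = f j := by
    obtain ⟨i, j, hij, hfij⟩ := Finite.exists_ne_map_eq_of_infinite f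
    rcases hij.lt_or_gt with hh | hh
    · exact ⟨j, i, hh, hfij.symm⟩
    · exact ⟨i, j, hh, hfij⟩
  set N := Nat.find hEx with hNdef
  obtain ⟨j₀, hj₀N, hfN⟩ := Nat.find_spec hEx
  have hinj' : ∀ i j, i < j → j < N → f i ≠ f j := by
    intro i j hij hjN hh
    exact Nat.find_min hEx hjN ⟨i, hij, hh.symm⟩
  have hN1 : 1 ≤ N := by omega
  obtain ⟨M, hM⟩ : ∃ M, N = M + 1 := ⟨N - 1, by omega⟩
  have hfM : f (M + 1) = f j₀ := by rw [← hM]; exact hfN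
  -- j₀ = 0
  have hj₀ : j₀ = 0 := by
    by_contra hj₀ne
    obtain ⟨t, rfl⟩ : ∃ t, j₀ = t + 1 := ⟨j₀ - 1, by omega⟩
    have hedgeM : EdgeRel (f (t + 1)) (f M) := by
      have := hE M
      rw [hfM] at this
      exact this.symm
    rcases huniq t (f M) (hmemS M) hedgeM with hh | hh
    · -- f M = f t
      have htM : t < M := by omega
      exact hinj' t M htM (by omega) hh.symm
    · -- f M = f (t + 2)
      have hle : t + 2 ≤ M + 1 := by omega
      rcases Nat.lt_or_ge (t + 2) M with hc | hc
      · exact hinj' (t + 2) M hc (by omega) hh.symm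
      · rcases Nat.eq_or_lt_of_le hc with hc2 | hc2
        · -- t + 2 = M : f (M+1) = f (t+1) = f (M-1), contradict hno
          have : f (t + 1 + 2) = f (t + 1) := by
            rw [show t + 1 + 2 = M + 1 by omega, hfM]
          exact hno (t + 1) this
        · -- t + 2 = M + 1, i.e. t + 1 = M : f (M+1) = f M contradict edge
          have ht1M : t + 1 = M := by omega
          have := (hE M).1
          rw [hfM, ht1M] at this
          exact this rfl
  subst hj₀
  have hN3 : 3 ≤ N := by
    rcases Nat.lt_or_ge M 2 with hh | hh
    · exfalso
      interval_cases M
      · exact (hE 0).1 hfM.symm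
      · exact hno 0 hfM
    · omega
  have hM2 : 2 ≤ M := by omega
  -- identify v₀ = f M
  have hedgeM0 : EdgeRel (f 0) (f M) := by
    have := hE M
    rw [hfM] at this
    exact this.symm
  have hv₀M : v₀ = f M := by
    rcases huniq0 (f M) (hmemS M) hedgeM0 with hh | hh
    · exact absurd hh.symm (hinj' 1 M (by omega) (by omega))
    · exact hh.symm
  -- the cycle map
  refine ⟨N, hN3, fun i => f i, ?_, fun i => hmemS i, ?_, ?_⟩
  · intro i j hij
    by_contra hne2
    rcases (Fin.val_ne_iff.mpr hne2).lt_or_gt with hh | hh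
    · exact hinj' i j hh j.2 hij
    · exact hinj' j i hh i.2 hij.symm
  · intro i j hij
    have hiv : (i : ℕ) < N := i.2
    have hjv : (j : ℕ) < N := j.2
    have hijv : (i : ℕ) < (j : ℕ) := hij
    constructor
    · rintro ⟨c, hc, hci, hcj⟩
      have hanij : f i ≠ f j := hinj' i j hijv hjv
      have hedgeij : EdgeRel (f i) (f j) := ⟨hanij, c, hc, hci, hcj⟩
      rcases Nat.eq_zero_or_pos (i : ℕ) with hi0 | hipos
      · rw [hi0] at hedgeij
        rcases huniq0 (f j) (hmemS j) hedgeij with hh | hh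
        · left
          by_contra hc2
          exact hinj' 1 j (by omega) hjv hh.symm
        · right
          rw [hv₀M] at hh
          refine ⟨hi0, ?_⟩
          by_contra hc2
          rcases Nat.lt_or_ge (j : ℕ) M with hcc | hcc
          · exact hinj' j M hcc (by omega) hh
          · omega
      · obtain ⟨t, ht⟩ : ∃ t, (i : ℕ) = t + 1 := ⟨(i : ℕ) - 1, by omega⟩
        rw [ht] at hedgeij
        rcases huniq t (f j) (hmemS j) hedgeij with hh | hh
        · exact absurd hh.symm (hinj' t j (by omega) hjv)
        · left
          by_contra hc2
          rcases Nat.lt_or_ge (t + 2) N with hcc | hcc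
          · rcases Nat.lt_or_ge (j : ℕ) (t + 2) with hdd | hdd
            · exact hinj' j (t + 2) hdd hcc hh
            · exact hinj' (t + 2) j (by omega) hjv hh.symm
          · -- t + 2 = N, so f (t+2) = f (M+1) = f 0, so f j = f 0
            have : f (t + 2) = f 0 := by rw [show t + 2 = M + 1 by omega]; exact hfM
            rw [this] at hh
            exact hinj' 0 j (by omega) hjv hh.symm
    · intro hr
      rcases hr with hh | ⟨hh0, hhN⟩
      · have := hE i
        rw [show (i : ℕ) + 1 = (j : ℕ) by omega] at this
        exact this.2
      · obtain ⟨c, hc1, hc2, hc3⟩ := hedgeM0.2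
        refine ⟨c, hc1, ?_, ?_⟩
        · show c ≤ f (i : ℕ)
          rw [show (i : ℕ) = 0 from hh0]
          exact hc2
        · show c ≤ f (j : ℕ)
          rw [show (j : ℕ) = M by omega]
          exact hc3
  · -- no edges leaving the cycle
    intro w hw hwr i hew
    have hwf : ∀ k < N, w ≠ f k := by
      intro k hk hh
      exact hwr ⟨⟨k, hk⟩, hh.symm⟩
    rcases Nat.eq_zero_or_pos (i : ℕ) with hi0 | hipos
    · have : EdgeRel (f 0) w := by rw [← hi0]; exact hew
      rcases huniq0 w hw this with hh | hh
      · exact hwf 1 (by omega) hh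
      · rw [hv₀M] at hh
        exact hwf M (by omega) hh
    · obtain ⟨t, ht⟩ : ∃ t, (i : ℕ) = t + 1 := ⟨(i : ℕ) - 1, by omega⟩
      have : EdgeRel (f (t + 1)) w := by rw [← ht]; exact hew
      rcases huniq t w hw this with hh | hh
      · exact hwf t (by omega) hh
      · rcases Nat.lt_or_ge (t + 2) N with hcc | hcc
        · exact hwf (t + 2) hcc hh
        · have h2 : f (t + 2) = f 0 := by rw [show t + 2 = M + 1 by omega]; exact hfM
          rw [h2] at hh
          exact hwf 0 (by omega) hh

end Extract
/-- For a finite distributive lattice satisfying the Two-cover Property, the Decomposable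
Cyclic Elements Property holds if and only if every multicyclic element is the join of two
VW-elements `y`, `z` with `maxJI D ∩ ↓y ∩ ↓z = ∅`. -/
theorem decomposableCyclicElements_iff_multicyclic_decomposition
    (D : Type*) [DistribLattice D] [OrderBot D] [Fintype D]
    (htc : TwoCoverProperty D) :
    DecomposableCyclicElements D ↔
      ∀ x : D, IsMulticyclic x →
        ∃ y z : D, IsVWElem y ∧ IsVWElem z ∧ x = y ⊔ z ∧
          maxJI D ∩ Set.Iic y ∩ Set.Iic z = ∅ := by
  classical
  constructor
  · intro hDCE
    have main : ∀ k : ℕ, ∀ x : D, IsMulticyclic x →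
        (maxJI D ∩ Set.Iic x).ncard ≤ k →
        ∃ y z : D, IsVWElem y ∧ IsVWElem z ∧ x = y ⊔ z ∧
          maxJI D ∩ Set.Iic y ∩ Set.Iic z = ∅ := by
      intro k
      induction k with
      | zero =>
        intro x hmx hcard
        exfalso
        have hemp := Set.ncard_eq_zero (Set.toFinite _) |>.mp (Nat.le_zero.mp hcard)
        obtain ⟨w, hw⟩ := hmx.1
        rw [hemp] at hw
        exact hw
      | succ k ih =>
        intro x hmx hcard
        obtain ⟨N, hN3, a, hinj, hmemS, hedge, hnoout⟩ := multicyclic_structure hmx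
        set x₁ : D := Finset.univ.sup a with hx₁def
        have hcyc : IsCyclicElem x₁ :=
          ⟨N, hN3, a, hinj, fun i => (hmemS i).1, rfl, hedge⟩
        have hC : maxJI D ∩ Set.Iic x₁ = Set.range a := by
          rw [hx₁def, maxJI_inter_Iic_sup Finset.univ a (fun i _ => (hmemS i).1)]
          simp [Set.image_univ]
        have hlub₁ : IsLUB (Set.range a) x₁ := by
          have := isLUB_finsetSup Finset.univ a
          simpa [Set.image_univ] using this
        have hrangesub : Set.range a ⊆ maxJI D ∩ Set.Iic x := by
          rintro w ⟨i, rfl⟩; exact hmemS i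
        obtain ⟨y₁, z₁, hy₁, hz₁, hx₁eq, hd₁⟩ := hDCE x₁ hcyc
        have hy₁sub : maxJI D ∩ Set.Iic y₁ ⊆ Set.range a := by
          rintro m ⟨hm1, hm2⟩
          rw [← hC]
          exact ⟨hm1, hm2.trans (hx₁eq ▸ le_sup_left)⟩
        have hz₁sub : maxJI D ∩ Set.Iic z₁ ⊆ Set.range a := by
          rintro m ⟨hm1, hm2⟩
          rw [← hC]
          exact ⟨hm1, hm2.trans (hx₁eq ▸ le_sup_right)⟩
        by_cases hsub : maxJI D ∩ Set.Iic x ⊆ Set.range a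
        · have hSeq : maxJI D ∩ Set.Iic x = Set.range a :=
            le_antisymm hsub hrangesub
          have hxeq : x = x₁ := by
            apply hmx.2.1.unique
            rw [hSeq]
            exact hlub₁
          exact ⟨y₁, z₁, hy₁, hz₁, hxeq ▸ hx₁eq, hd₁⟩
        · -- remainder R
          set R : Set D := (maxJI D ∩ Set.Iic x) \ Set.range a with hRdef
          have hRfin : R.Finite := Set.toFinite _
          have hRne : R.Nonempty := by
            obtain ⟨w, hw, hwr⟩ := Set.not_subset.mp hsub
            exact ⟨w, hw, hwr⟩
          set x₂ : D := hRfin.toFinset.sup id with hx₂def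
          have hRmax : ∀ r ∈ hRfin.toFinset, (id r : D) ∈ maxJI D := by
            intro r hr
            rw [Set.Finite.mem_toFinset] at hr
            exact hr.1.1
          have himg : (id '' ↑hRfin.toFinset : Set D) = R := by
            rw [Set.image_id, Set.Finite.coe_toFinset]
          have hR2 : maxJI D ∩ Set.Iic x₂ = R := by
            rw [hx₂def, maxJI_inter_Iic_sup hRfin.toFinset id hRmax, himg]
          have hlub₂ : IsLUB R x₂ := by
            have := isLUB_finsetSup hRfin.toFinset (id : D → D)
            rwa [himg] at this
          have hRnoedge : ∀ w ∈ R, ∀ i, ¬ EdgeRel (a i) w := by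
            intro w hw i
            exact hnoout w hw.1 hw.2 i
          have hmx₂ : IsMulticyclic x₂ := by
            refine ⟨?_, ?_, ?_⟩
            · rw [hR2]; exact hRne
            · rw [hR2]; exact hlub₂
            · intro y hy
              rw [hR2] at hy
              obtain ⟨u, v, hu, hv, huv, heu, hev, hun⟩ := hmx.2.2 y hy.1
              have hinR : ∀ w, w ∈ maxJI D ∩ Set.Iic x → EdgeRel y w → w ∈ R := by
                intro w hw hew
                refine ⟨hw, ?_⟩
                rintro ⟨i, rfl⟩
                exact hRnoedge y hy i hew.symm
              have huR : u ∈ R := hinR u hu heu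
              have hvR : v ∈ R := hinR v hv hev
              refine ⟨u, v, ?_, ?_, huv, heu, hev, ?_⟩
              · rw [hR2]; exact huR
              · rw [hR2]; exact hvR
              · intro w hw hew
                rw [hR2] at hw
                exact hun w hw.1 hew
          have hcard₂ : (maxJI D ∩ Set.Iic x₂).ncard ≤ k := by
            rw [hR2]
            have hlt : R.ncard < (maxJI D ∩ Set.Iic x).ncard := by
              apply Set.ncard_lt_ncard
              · constructor
                · exact Set.diff_subset
                · intro hh
                  have hi : a ⟨0, by omega⟩ ∈ R := hh (hmemS _)
                  exact hi.2 ⟨_, rfl⟩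
              · exact Set.toFinite _
            omega
          obtain ⟨y₂, z₂, hy₂, hz₂, hx₂eq, hd₂⟩ := ih x₂ hmx₂ hcard₂
          have hy₂sub : maxJI D ∩ Set.Iic y₂ ⊆ R := by
            rintro m ⟨hm1, hm2⟩
            rw [← hR2]
            exact ⟨hm1, hm2.trans (hx₂eq ▸ le_sup_left)⟩
          have hz₂sub : maxJI D ∩ Set.Iic z₂ ⊆ R := by
            rintro m ⟨hm1, hm2⟩
            rw [← hR2]
            exact ⟨hm1, hm2.trans (hx₂eq ▸ le_sup_right)⟩
          -- no edges between the range side and R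
          have hcross : ∀ p ∈ Set.range a, ∀ q ∈ R, ¬ EdgeRel p q := by
            rintro p ⟨i, rfl⟩ q hq
            exact hRnoedge q hq i
          have hdisjCR : ∀ m : D, m ∈ Set.range a → m ∈ R → False := by
            intro m h1 h2
            exact h2.2 h1
          -- combine
          have hdy : maxJI D ∩ Set.Iic y₁ ∩ Set.Iic y₂ = ∅ := by
            ext m
            simp only [Set.mem_empty_iff_false, iff_false]
            rintro ⟨⟨hm1, hm2⟩, hm3⟩
            exact hdisjCR m (hy₁sub ⟨hm1, hm2⟩) (hy₂sub ⟨hm1, hm3⟩)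
          have hdz : maxJI D ∩ Set.Iic z₁ ∩ Set.Iic z₂ = ∅ := by
            ext m
            simp only [Set.mem_empty_iff_false, iff_false]
            rintro ⟨⟨hm1, hm2⟩, hm3⟩
            exact hdisjCR m (hz₁sub ⟨hm1, hm2⟩) (hz₂sub ⟨hm1, hm3⟩)
          have hney : ∀ p ∈ maxJI D ∩ Set.Iic y₁, ∀ q ∈ maxJI D ∩ Set.Iic y₂,
              ¬ EdgeRel p q := fun p hp q hq => hcross p (hy₁sub hp) q (hy₂sub hq)
          have hnez : ∀ p ∈ maxJI D ∩ Set.Iic z₁, ∀ q ∈ maxJI D ∩ Set.Iic z₂,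
              ¬ EdgeRel p q := fun p hp q hq => hcross p (hz₁sub hp) q (hz₂sub hq)
          refine ⟨y₁ ⊔ y₂, z₁ ⊔ z₂, hy₁.sup_of_disjoint hy₂ hdy hney,
            hz₁.sup_of_disjoint hz₂ hdz hnez, ?_, ?_⟩
          · have hx12 : x = x₁ ⊔ x₂ := by
              apply hmx.2.1.unique
              have hU : Set.range a ∪ R = maxJI D ∩ Set.Iic x := by
                rw [hRdef, Set.union_diff_cancel' (le_refl _) hrangesub]
              rw [← hU]
              exact hlub₁.union hlub₂
            rw [hx12, hx₁eq, hx₂eq, sup_sup_sup_comm]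
          · ext m
            simp only [Set.mem_empty_iff_false, iff_false]
            rintro ⟨⟨hm1, hm2⟩, hm3⟩
            rcases hm1.1.le_sup' hm2 with hh | hh <;>
              rcases hm1.1.le_sup' hm3 with hh' | hh'
            · have hmm : m ∈ maxJI D ∩ Set.Iic y₁ ∩ Set.Iic z₁ := ⟨⟨hm1, hh⟩, hh'⟩
              rw [hd₁] at hmm
              exact hmm
            · exact hdisjCR m (hy₁sub ⟨hm1, hh⟩) (hz₂sub ⟨hm1, hh'⟩)
            · exact hdisjCR m (hz₁sub ⟨hm1, hh'⟩) (hy₂sub ⟨hm1, hh⟩)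
            · have hmm : m ∈ maxJI D ∩ Set.Iic y₂ ∩ Set.Iic z₂ := ⟨⟨hm1, hh⟩, hh'⟩
              rw [hd₂] at hmm
              exact hmm
    intro x hmx
    exact main (maxJI D ∩ Set.Iic x).ncard x hmx le_rfl
  · intro hmd x hcyc
    exact hmd x hcyc.isMulticyclic
end

section
/- Let n ≥ 3 be odd and let D be a finite distributive lattice whose poset J(D) of join-irreducible elements is order-isomorphic to the n-crown K_n. Then D does not satisfy the Bipartite Maximal Elements Property. -/
section CrownLemmas

lemma crown_le_iff {n : ℕ} (x y : Crown n) :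
    x ≤ y ↔ x = y ∨ ∃ i j : Fin n, x.toSum = Sum.inr i ∧ y.toSum = Sum.inl j ∧
      ((j : ℕ) = (i : ℕ) ∨ (j : ℕ) = ((i : ℕ) + 1) % n) := Iff.rfl

lemma crown_lt_iff {n : ℕ} (x y : Crown n) :
    x < y ↔ ∃ i j : Fin n, x.toSum = Sum.inr i ∧ y.toSum = Sum.inl j ∧
      ((j : ℕ) = (i : ℕ) ∨ (j : ℕ) = ((i : ℕ) + 1) % n) := by
  constructor
  · intro hlt
    rcases (crown_le_iff x y).mp hlt.le with rfl | h2
    · exact absurd rfl hlt.ne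
    · exact h2
  · rintro ⟨i, j, hx, hy, hij⟩
    refine lt_of_le_of_ne ((crown_le_iff x y).mpr (Or.inr ⟨i, j, hx, hy, hij⟩)) ?_
    rintro rfl
    rw [hx] at hy; exact absurd hy (by simp)

lemma crown_inl_max {n : ℕ} (j : Fin n) (y : Crown n) (h : (⟨Sum.inl j⟩ : Crown n) ≤ y) :
    y = ⟨Sum.inl j⟩ := by
  rcases (crown_le_iff _ _).mp h with h | ⟨i, j', hx, _, _⟩
  · exact h.symm
  · exact absurd hx (by simp)

lemma crown_no_between {n : ℕ} (x y z : Crown n) (h1 : x < y) (h2 : y < z) : False := by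
  obtain ⟨i, j, _, hy, _⟩ := (crown_lt_iff x y).mp h1
  obtain ⟨i', j', hy', _, _⟩ := (crown_lt_iff y z).mp h2
  rw [hy] at hy'; exact absurd hy' (by simp)

end CrownLemmas

/-- If `n ≥ 3` is odd and the poset of join-irreducible elements of a finite distributive
lattice `D` is order-isomorphic to the `n`-crown, then `D` does not satisfy the Bipartite
Maximal Elements Property. -/
theorem not_bipartiteMaxElements_of_joinIrred_poset_iso_odd_crown
    (n : ℕ) (hn : 3 ≤ n) (hodd : Odd n)
    (D : Type*) [DistribLattice D] [OrderBot D] [Fintype D]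
    (h : Nonempty ({x : D // JoinIrred x} ≃o Crown n)) :
    ¬BipartiteMaxElements D := by
  intro hbip
  obtain ⟨A, B, hAne, hBne, hdisj, hunion, hAA, hBB⟩ := hbip
  obtain ⟨e⟩ := h
  classical
  have hnpos : 0 < n := by omega
  -- the maximal and minimal elements of the crown, pulled back to D
  let aa : Fin n → D := fun j => (e.symm ⟨Sum.inl j⟩).1
  let bb : Fin n → D := fun j => (e.symm ⟨Sum.inr j⟩).1
  have haJI : ∀ j, JoinIrred (aa j) := fun j => (e.symm ⟨Sum.inl j⟩).2
  have hbJI : ∀ j, JoinIrred (bb j) := fun j => (e.symm ⟨Sum.inr j⟩).2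
  have haeq : ∀ j, (⟨aa j, haJI j⟩ : {x : D // JoinIrred x}) = e.symm ⟨Sum.inl j⟩ :=
    fun j => rfl
  have hbeq : ∀ j, (⟨bb j, hbJI j⟩ : {x : D // JoinIrred x}) = e.symm ⟨Sum.inr j⟩ :=
    fun j => rfl
  have hainj : Function.Injective aa := by
    intro i j hij
    have h1 : e.symm ⟨Sum.inl i⟩ = e.symm ⟨Sum.inl j⟩ := by
      rw [← haeq, ← haeq]; exact Subtype.ext hij
    have h2 : (⟨Sum.inl i⟩ : Crown n) = ⟨Sum.inl j⟩ := e.symm.injective h1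
    have := congrArg Crown.toSum h2
    simpa using this
  -- each aa j is a maximal join-irreducible element
  have hamax : ∀ j, aa j ∈ maxJI D := by
    intro j
    refine ⟨haJI j, fun b hb hle => ?_⟩
    have h1 : (e.symm ⟨Sum.inl j⟩ : {x : D // JoinIrred x}) ≤ ⟨b, hb⟩ := hle
    have h2 : (⟨Sum.inl j⟩ : Crown n) ≤ e ⟨b, hb⟩ := by
      have := e.monotone h1
      rwa [e.apply_symm_apply] at this
    have h3 : e ⟨b, hb⟩ = ⟨Sum.inl j⟩ := crown_inl_max j _ h2
    have h4 : (⟨b, hb⟩ : {x : D // JoinIrred x}) = e.symm ⟨Sum.inl j⟩ := by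
      rw [← h3, e.symm_apply_apply]
    exact (congrArg Subtype.val h4).symm
  -- covering relation: bb i covers into aa j whenever the crown says so
  have hcov : ∀ i j : Fin n, ((j : ℕ) = (i : ℕ) ∨ (j : ℕ) = ((i : ℕ) + 1) % n) →
      JCovBy (bb i) (aa j) := by
    intro i j hij
    have hlt_crown : (⟨Sum.inr i⟩ : Crown n) < ⟨Sum.inl j⟩ :=
      (crown_lt_iff _ _).mpr ⟨i, j, rfl, rfl, hij⟩
    have hlt_sub : (e.symm ⟨Sum.inr i⟩ : {x : D // JoinIrred x}) < e.symm ⟨Sum.inl j⟩ :=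
      e.symm.strictMono hlt_crown
    have hlt : bb i < aa j := hlt_sub
    refine ⟨hbJI i, haJI j, hlt, fun d hd h1 h2 => ?_⟩
    have h1' : (e.symm ⟨Sum.inr i⟩ : {x : D // JoinIrred x}) < ⟨d, hd⟩ := h1
    have h2' : (⟨d, hd⟩ : {x : D // JoinIrred x}) < e.symm ⟨Sum.inl j⟩ := h2
    have c1 : (⟨Sum.inr i⟩ : Crown n) < e ⟨d, hd⟩ := by
      have := e.strictMono h1'
      rwa [e.apply_symm_apply] at this
    have c2 : e ⟨d, hd⟩ < (⟨Sum.inl j⟩ : Crown n) := by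
      have := e.strictMono h2'
      rwa [e.apply_symm_apply] at this
    exact crown_no_between _ _ _ c1 c2
  -- the cyclic successor
  let s : Fin n → Fin n := fun j => ⟨((j : ℕ) + 1) % n, Nat.mod_lt _ hnpos⟩
  have hsne : ∀ j, j ≠ s j := by
    intro j hj
    have := congrArg Fin.val hj
    simp only [s] at this
    rcases Nat.lt_or_ge ((j : ℕ) + 1) n with hlt | hge
    · rw [Nat.mod_eq_of_lt hlt] at this; omega
    · have hj2 : (j : ℕ) < n := j.isLt
      have : (j : ℕ) = ((j : ℕ) + 1) % n := this
      have he : ((j : ℕ) + 1) % n = 0 := by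
        have : (j : ℕ) + 1 = n := by omega
        rw [this, Nat.mod_self]
      omega
  -- coloring
  let f : Fin n → Bool := fun j => decide (aa j ∈ A)
  have hmem : ∀ j, aa j ∈ A ∪ B := by intro j; rw [hunion]; exact hamax j
  have hflip : ∀ j, f (s j) = ! f j := by
    intro j
    have hane : aa j ≠ aa (s j) := fun hc => hsne j (hainj hc)
    have hcov1 : JCovBy (bb j) (aa j) := hcov j j (Or.inl rfl)
    have hcov2 : JCovBy (bb j) (aa (s j)) := hcov j (s j) (Or.inr rfl)
    rcases hmem j with hA1 | hB1 <;> rcases hmem (s j) with hA2 | hB2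
    · exact absurd ⟨bb j, hcov1, hcov2⟩ (hAA _ hA1 _ hA2 hane)
    · have hnA2 : aa (s j) ∉ A := fun hc => (Set.disjoint_left.mp hdisj hc) hB2
      simp only [f]
      rw [decide_eq_true hA1, decide_eq_false hnA2]; rfl
    · have hnA1 : aa j ∉ A := fun hc => (Set.disjoint_left.mp hdisj hc) hB1
      simp only [f]
      rw [decide_eq_true hA2, decide_eq_false hnA1]; rfl
    · exact absurd ⟨bb j, hcov1, hcov2⟩ (hBB _ hB1 _ hB2 hane)
  -- alternation along the cycle
  have hpar : ∀ k : ℕ, (hk : k < n) →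
      f ⟨k, hk⟩ = (if k % 2 = 0 then f ⟨0, hnpos⟩ else ! f ⟨0, hnpos⟩) := by
    intro k
    induction k with
    | zero => intro hk; simp
    | succ m ih =>
      intro hk
      have hm : m < n := by omega
      have hstep : (⟨m + 1, hk⟩ : Fin n) = s ⟨m, hm⟩ := by
        apply Fin.ext
        simp only [s]
        rw [Nat.mod_eq_of_lt hk]
      rw [hstep, hflip, ih hm]
      rcases Nat.even_or_odd m with he | ho
      · have h1 : m % 2 = 0 := Nat.even_iff.mp he
        have h2 : (m + 1) % 2 = 1 := by omega
        rw [h1, h2]; simp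
      · have h1 : m % 2 = 1 := Nat.odd_iff.mp ho
        have h2 : (m + 1) % 2 = 0 := by omega
        rw [h1, h2]; simp
  -- close the cycle: n - 1 is even since n is odd
  have hm1 : n - 1 < n := by omega
  have hlast : f ⟨n - 1, hm1⟩ = f ⟨0, hnpos⟩ := by
    have hpare : (n - 1) % 2 = 0 := by
      obtain ⟨t, ht⟩ := hodd; omega
    rw [hpar (n - 1) hm1, hpare]; simp
  have hs0 : s ⟨n - 1, hm1⟩ = ⟨0, hnpos⟩ := by
    apply Fin.ext
    simp only [s]
    have : (n - 1) + 1 = n := by omega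
    rw [this, Nat.mod_self]
  have := hflip ⟨n - 1, hm1⟩
  rw [hs0, hlast] at this
  exact (Bool.eq_not_self _).mp this
end
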